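/- Temporal message passing is strictly weaker than message passing on the collapsed static graph when T > 1: every R²-TGNN node classifier is computable by an R²-GNN on the collapsed graph (R²-TGNN ⊆ R²-GNN ∘ H), and the inclusion is strict, witnessed by the temporal graph with snapshots G_1 = {r(1,2), r(4,5)} and G_2 = {r(2,3)} on nodes {1,…,5}: the collapsed-graph classifier ∃y ( r^1(x,y) ∧ ∃x r^2(x,y) ) distinguishes nodes 1 and 4, but no R²-TGNN run forward in time can distinguish them. -/

import Mathlib

inductive Var : Type
  | x | y
deriving DecidableEq

structure MRGraph (P1 P2 : Type) where
  V : Type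
  [fintV : Fintype V]
  [decV : DecidableEq V]
  unary : P1 → V → Prop
  rel : P2 → V → V → Prop
  [decU : ∀ p, DecidablePred (unary p)]
  [decR : ∀ r, DecidableRel (rel r)]

attribute [instance] MRGraph.fintV MRGraph.decV MRGraph.decU MRGraph.decR

inductive FOC2 (P1 P2 : Type) : Type
  | tru : FOC2 P1 P2
  | atom : P1 → Var → FOC2 P1 P2
  | rel : P2 → Var → Var → FOC2 P1 P2
  | and : FOC2 P1 P2 → FOC2 P1 P2 → FOC2 P1 P2
  | or : FOC2 P1 P2 → FOC2 P1 P2 → FOC2 P1 P2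
  | not : FOC2 P1 P2 → FOC2 P1 P2
  | exge : ℕ → Var → FOC2 P1 P2 → FOC2 P1 P2

variable {P1 P2 : Type}

/-- Satisfaction of a `FOC2` formula in a multi-relational graph under an assignment. -/
def MRGraph.sat (G : MRGraph P1 P2) : (Var → G.V) → FOC2 P1 P2 → Prop
  | _, .tru => True
  | σ, .atom p v => G.unary p (σ v)
  | σ, .rel r u w => G.rel r (σ u) (σ w)
  | σ, .and φ ψ => G.sat σ φ ∧ G.sat σ ψ
  | σ, .or φ ψ => G.sat σ φ ∨ G.sat σ ψ
  | σ, .not φ => ¬ G.sat σ φ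
  | σ, .exge n v φ => ∃ S : Finset G.V, S.card = n ∧ ∀ a ∈ S, G.sat (Function.update σ v a) φ

/-- Quantifier depth. -/
def FOC2.depth : FOC2 P1 P2 → ℕ
  | .tru => 0
  | .atom _ _ => 0
  | .rel _ _ _ => 0
  | .and φ ψ => max φ.depth ψ.depth
  | .or φ ψ => max φ.depth ψ.depth
  | .not φ => φ.depth
  | .exge _ _ φ => φ.depth + 1

/-- All counting thresholds are at most `m`. -/
def FOC2.thresholdsLe (m : ℕ) : FOC2 P1 P2 → Prop
  | .tru => True
  | .atom _ _ => True
  | .rel _ _ _ => True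
  | .and φ ψ => φ.thresholdsLe m ∧ ψ.thresholdsLe m
  | .or φ ψ => φ.thresholdsLe m ∧ ψ.thresholdsLe m
  | .not φ => φ.thresholdsLe m
  | .exge n _ φ => n ≤ m ∧ φ.thresholdsLe m

/-- Free variables. -/
def FOC2.freeVars : FOC2 P1 P2 → Finset Var
  | .tru => ∅
  | .atom _ v => {v}
  | .rel _ u w => {u, w}
  | .and φ ψ => φ.freeVars ∪ ψ.freeVars
  | .or φ ψ => φ.freeVars ∪ ψ.freeVars
  | .not φ => φ.freeVars
  | .exge _ v φ => φ.freeVars \ {v}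

/-- Parse-tree size. -/
def FOC2.size : FOC2 P1 P2 → ℕ
  | .tru => 1
  | .atom _ _ => 1
  | .rel _ _ _ => 1
  | .and φ ψ => φ.size + ψ.size + 1
  | .or φ ψ => φ.size + ψ.size + 1
  | .not φ => φ.size + 1
  | .exge _ _ φ => φ.size + 1

/-- A generic R²-GNN run: per-layer combination functions taking the node's previous
feature, for each relation the multiset of neighbours' features, and the global multiset. -/
def runGNN (G : MRGraph P1 P2) {X : Type} (h0 : G.V → X)
    (C : ℕ → X → (P2 → Multiset X) → Multiset X → X) : ℕ → G.V → X
  | 0, v => h0 v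
  | i + 1, v =>
    C i (runGNN G h0 C i v)
      (fun r => (Finset.univ.filter (fun u => G.rel r v u)).val.map (runGNN G h0 C i))
      (Finset.univ.val.map (runGNN G h0 C i))

/-- A temporal knowledge graph with `T` snapshots over a common node set. -/
structure TGraph (P1 P2 : Type) (T : ℕ) where
  V : Type
  [fintV : Fintype V]
  [decV : DecidableEq V]
  unary : Fin T → P1 → V → Prop
  rel : Fin T → P2 → V → V → Prop
  [decU : ∀ t p, DecidablePred (unary t p)]
  [decR : ∀ t r, DecidableRel (rel t r)]

attribute [instance] TGraph.fintV TGraph.decV TGraph.decU TGraph.decR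

variable {T : ℕ}

/-- The snapshot at time `t`. -/
def TGraph.snap (G : TGraph P1 P2 T) (t : Fin T) : MRGraph P1 P2 where
  V := G.V
  unary := G.unary t
  rel := G.rel t
  decU := G.decU t
  decR := G.decR t

/-- The collapse `H`: the union over all timestamps of the temporalized snapshots, a
static graph over the timestamped predicates. -/
def TGraph.collapse (G : TGraph P1 P2 T) : MRGraph (P1 × Fin T) (P2 × Fin T) where
  V := G.V
  unary := fun p v => G.unary p.2 p.1 v
  rel := fun r a b => G.rel r.2 r.1 a b
  decU := fun p => G.decU p.2 p.1
  decR := fun r => G.decR r.2 r.1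

/-- A run of an R²-TGNN: at each timestamp `t`, the R²-GNN `C t` (with `Lt t` layers)
is run on snapshot `t`, initialized with the encoding of the one-hot unary information
at time `t` together with the previous timestamp's feature. -/
def runT (G : TGraph P1 P2 T) {X : Type} (xinit : X)
    (enc : (P1 → Bool) → X → X)
    (C : Fin T → ℕ → X → (P2 → Multiset X) → Multiset X → X)
    (Lt : Fin T → ℕ) : ℕ → G.V → X
  | 0, _ => xinit
  | t + 1, v =>
    if h : t < T then
      runGNN (G.snap ⟨t, h⟩)
        (fun u => enc (fun q => @decide (G.unary ⟨t, h⟩ q u) (G.decU ⟨t, h⟩ q u))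
          (runT G xinit enc C Lt t u))
        (C ⟨t, h⟩) (Lt ⟨t, h⟩) v
    else runT G xinit enc C Lt t v

/-- Two nodes are connected if some relation holds between them in some direction. -/
def connected (G : MRGraph P1 P2) [Fintype P2] (p : G.V × G.V) : Prop :=
  ∃ r : P2, G.rel r p.1 p.2 ∨ G.rel r p.2 p.1

instance (G : MRGraph P1 P2) [Fintype P2] (p : G.V × G.V) : Decidable (connected G p) := by
  unfold connected; infer_instance

/-- Unary predicates of the transformed graph: original unary predicates live on the
primal (original) nodes, and the fresh predicate `primal` marks them. -/
def transUnaryB (G : MRGraph P1 P2) [Fintype P2] :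
    (P1 ⊕ Unit) → (G.V ⊕ {p : G.V × G.V // connected G p}) → Bool
  | Sum.inl q, Sum.inl v => decide (G.unary q v)
  | Sum.inr _, Sum.inl _ => true
  | _, _ => false

/-- Relations of the transformed graph: original relations are moved onto the pairs
`(e_ab, e_ba)` of added nodes, `aux1` (encoded `true`) connects `a` with `e_ab`, and
`aux2` (encoded `false`) connects `e_ab` with `e_ba`. -/
def transRelB (G : MRGraph P1 P2) [Fintype P2] :
    (P2 ⊕ Bool) → (G.V ⊕ {p : G.V × G.V // connected G p}) →
      (G.V ⊕ {p : G.V × G.V // connected G p}) → Bool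
  | Sum.inl q, Sum.inr e, Sum.inr e' =>
      decide (e'.val = (e.val.2, e.val.1)) && decide (G.rel q e.val.1 e.val.2)
  | Sum.inr true, Sum.inl a, Sum.inr e => decide (e.val.1 = a)
  | Sum.inr true, Sum.inr e, Sum.inl a => decide (e.val.1 = a)
  | Sum.inr false, Sum.inr e, Sum.inr e' => decide (e'.val = (e.val.2, e.val.1))
  | _, _, _ => false

/-- The graph transformation `F` on static multi-relational graphs. -/
def transF (G : MRGraph P1 P2) [Fintype P2] : MRGraph (P1 ⊕ Unit) (P2 ⊕ Bool) where
  V := G.V ⊕ {p : G.V × G.V // connected G p}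
  unary := fun q v => transUnaryB G q v = true
  rel := fun r a b => transRelB G r a b = true
  decU := fun _ _ => instDecidableEqBool _ _
  decR := fun _ _ _ => instDecidableEqBool _ _

/-- Two nodes of a temporal graph are connected if some relation holds between them at
some timestamp. -/
def connectedT (G : TGraph P1 P2 T) [Fintype P2] (p : G.V × G.V) : Prop :=
  ∃ (t : Fin T) (r : P2), G.rel t r p.1 p.2 ∨ G.rel t r p.2 p.1

instance (G : TGraph P1 P2 T) [Fintype P2] (p : G.V × G.V) :
    Decidable (connectedT G p) := by
  unfold connectedT; infer_instance

/-- Per-snapshot unary predicates of the transformed temporal graph. -/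
def transTUnaryB (G : TGraph P1 P2 T) [Fintype P2] (t : Fin T) :
    (P1 ⊕ Unit) → (G.V ⊕ {p : G.V × G.V // connectedT G p}) → Bool
  | Sum.inl q, Sum.inl v => decide (G.unary t q v)
  | Sum.inr _, Sum.inl _ => true
  | _, _ => false

/-- Per-snapshot relations of the transformed temporal graph: original relations of
snapshot `t` are moved onto the added node pairs, while the `aux1`/`aux2` structural
edges are present at every timestamp. -/
def transTRelB (G : TGraph P1 P2 T) [Fintype P2] (t : Fin T) :
    (P2 ⊕ Bool) → (G.V ⊕ {p : G.V × G.V // connectedT G p}) →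
      (G.V ⊕ {p : G.V × G.V // connectedT G p}) → Bool
  | Sum.inl q, Sum.inr e, Sum.inr e' =>
      decide (e'.val = (e.val.2, e.val.1)) && decide (G.rel t q e.val.1 e.val.2)
  | Sum.inr true, Sum.inl a, Sum.inr e => decide (e.val.1 = a)
  | Sum.inr true, Sum.inr e, Sum.inl a => decide (e.val.1 = a)
  | Sum.inr false, Sum.inr e, Sum.inr e' => decide (e'.val = (e.val.2, e.val.1))
  | _, _, _ => false

/-- The per-snapshot graph transformation `F^T` of a temporal graph. -/
def transT (G : TGraph P1 P2 T) [Fintype P2] : TGraph (P1 ⊕ Unit) (P2 ⊕ Bool) T where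
  V := G.V ⊕ {p : G.V × G.V // connectedT G p}
  unary := fun t q v => transTUnaryB G t q v = true
  rel := fun t r a b => transTRelB G t r a b = true
  decU := fun _ _ _ => instDecidableEqBool _ _
  decR := fun _ _ _ _ => instDecidableEqBool _ _

/-- Symmetric edges of the witness temporal graph: at time `0`, `r(1,2)` and `r(4,5)`;
at time `1`, `r(2,3)` (0-indexed nodes). -/
def exEdges (t : Fin 2) : List (Fin 5 × Fin 5) :=
  if t.val = 0 then [(0, 1), (3, 4)] else [(1, 2)]

/-- The witness temporal graph on nodes `{1,…,5}` with snapshots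
`G₁ = {r(1,2), r(4,5)}` and `G₂ = {r(2,3)}`. -/
def Gex : TGraph Empty Unit 2 where
  V := Fin 5
  unary := fun _ q => q.elim
  rel := fun t _ a b => (a, b) ∈ exEdges t ∨ (b, a) ∈ exEdges t
  decU := fun _ q => q.elim
  decR := fun _ _ _ _ => by infer_instance

/-- The collapsed-graph classifier `∃y ( r¹(x,y) ∧ ∃x r²(x,y) )` over the timestamped
predicates `r¹ = ((),0)`, `r² = ((),1)`. -/
def phiEx : FOC2 (Empty × Fin 2) (Unit × Fin 2) :=
  FOC2.exge 1 Var.y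
    (FOC2.and (FOC2.rel ((), 0) Var.x Var.y)
      (FOC2.exge 1 Var.x (FOC2.rel ((), 1) Var.x Var.y)))
-- scratch aux tests
section AuxTest
variable {P1 P2 : Type}

/-- Decidability of satisfaction. -/
instance satDec (G : MRGraph P1 P2) : (φ : FOC2 P1 P2) → (σ : Var → G.V) →
    Decidable (G.sat σ φ)
  | .tru, _ => .isTrue trivial
  | .atom p v, σ => G.decU p (σ v)
  | .rel r u w, σ => G.decR r (σ u) (σ w)
  | .and φ ψ, σ => @instDecidableAnd _ _ (satDec G φ σ) (satDec G ψ σ)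
  | .or φ ψ, σ => @instDecidableOr _ _ (satDec G φ σ) (satDec G ψ σ)
  | .not φ, σ => @instDecidableNot _ (satDec G φ σ)
  | .exge n v φ, σ =>
      haveI : DecidablePred (fun a => G.sat (Function.update σ v a) φ) :=
        fun a => satDec G φ _
      inferInstanceAs (Decidable
        (∃ S : Finset G.V, S.card = n ∧ ∀ a ∈ S, G.sat (Function.update σ v a) φ))

example : Gex.collapse.sat (fun _ => (0 : Fin 5)) phiEx := @of_decide_eq_true _ (satDec _ _ _) (by decide)
example : ¬ Gex.collapse.sat (fun _ => (3 : Fin 5)) phiEx :=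
  @of_decide_eq_true _ (@instDecidableNot _ (satDec _ _ _)) (by decide)

end AuxTest
section AuxTest
variable {P1 P2 : Type}

lemma runGNN_equiv (G : MRGraph P1 P2) {X : Type} (h0 : G.V → X)
    (C : ℕ → X → (P2 → Multiset X) → Multiset X → X) (π : G.V ≃ G.V)
    (hrel : ∀ r a b, G.rel r (π a) (π b) ↔ G.rel r a b)
    (h0π : ∀ v, h0 (π v) = h0 v) :
    ∀ (k : ℕ) (v : G.V), runGNN G h0 C k (π v) = runGNN G h0 C k v := by
  intro k
  induction k with
  | zero => exact h0π
  | succ k ih =>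
    intro v
    show C k _ _ _ = C k _ _ _
    have hset : ∀ r, Finset.univ.filter (fun u => G.rel r (π v) u)
        = (Finset.univ.filter (fun u => G.rel r v u)).map π.toEmbedding := by
      intro r
      ext u
      simp only [Finset.mem_filter, Finset.mem_univ, true_and, Finset.mem_map,
        Equiv.coe_toEmbedding]
      constructor
      · intro h
        exact ⟨π.symm u, by rwa [← hrel r v (π.symm u), π.apply_symm_apply], π.apply_symm_apply u⟩
      · rintro ⟨w, hw, rfl⟩
        exact (hrel r v w).mpr hw
    have hnb : (fun r => (Finset.univ.filter (fun u => G.rel r (π v) u)).val.map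
          (runGNN G h0 C k))
        = fun r => (Finset.univ.filter (fun u => G.rel r v u)).val.map (runGNN G h0 C k) := by
      funext r
      rw [hset r]
      show ((Finset.univ.filter (fun u => G.rel r v u)).map π.toEmbedding).val.map _ = _
      rw [Finset.map_val, Multiset.map_map]
      exact Multiset.map_congr rfl (fun u _ => ih u)
    rw [ih v, hnb]

def piEx : Fin 5 ≃ Fin 5 where
  toFun := ![3, 4, 2, 0, 1]
  invFun := ![3, 4, 2, 0, 1]
  left_inv := by decide
  right_inv := by decide

lemma runT1_eq (X : Type) (xinit : X) (enc : (Empty → Bool) → X → X)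
    (C : Fin 2 → ℕ → X → (Unit → Multiset X) → Multiset X → X) (Lt : Fin 2 → ℕ) :
    ∀ v : Fin 5, runT Gex xinit enc C Lt 1 (piEx v) = runT Gex xinit enc C Lt 1 v := by
  intro v
  show runGNN (Gex.snap ⟨0, by norm_num⟩) _ _ _ (piEx v) = _
  apply runGNN_equiv
  · decide
  · intro u
    exact congr (congrArg enc (funext fun q => q.elim)) rfl

lemma part3 (X : Type) (xinit : X) (enc : (Empty → Bool) → X → X)
    (C : Fin 2 → ℕ → X → (Unit → Multiset X) → Multiset X → X) (Lt : Fin 2 → ℕ) :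
    runT Gex xinit enc C Lt 2 (0 : Fin 5) = runT Gex xinit enc C Lt 2 (3 : Fin 5) := by
  have key : ∀ k : ℕ,
      runGNN (Gex.snap ⟨1, by norm_num⟩)
        (fun u => enc (fun q => @decide (Gex.unary ⟨1, by norm_num⟩ q u) (Gex.decU _ q u))
          (runT Gex xinit enc C Lt 1 u))
        (C ⟨1, by norm_num⟩) k (0 : Fin 5)
      = runGNN (Gex.snap ⟨1, by norm_num⟩)
        (fun u => enc (fun q => @decide (Gex.unary ⟨1, by norm_num⟩ q u) (Gex.decU _ q u))
          (runT Gex xinit enc C Lt 1 u))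
        (C ⟨1, by norm_num⟩) k (3 : Fin 5) := by
    intro k
    induction k with
    | zero =>
      show enc _ _ = enc _ _
      have h03 : runT Gex xinit enc C Lt 1 (0 : Fin 5) = runT Gex xinit enc C Lt 1 (3 : Fin 5) := by
        have := runT1_eq X xinit enc C Lt 0
        exact this.symm
      exact congr (congrArg enc (funext fun q => q.elim)) h03
    | succ k ih =>
      show C _ k _ _ _ = C _ k _ _ _
      rw [ih]
      congr 1
  show runGNN _ _ _ _ _ = runGNN _ _ _ _ _
  exact key (Lt ⟨1, by norm_num⟩)

end AuxTest
section AuxSim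
variable {P1 P2 : Type}

/-- `Lt` extended to all of `ℕ`. -/
def extLt (T : ℕ) (Lt : Fin T → ℕ) (t : ℕ) : ℕ := if h : t < T then Lt ⟨t, h⟩ else 0

/-- Global layer count consumed by the first `k` timestamps. -/
def NN (T : ℕ) (Lt : Fin T → ℕ) (k : ℕ) : ℕ := ∑ t ∈ Finset.range k, (1 + extLt T Lt t)

lemma NN_succ (T : ℕ) (Lt : Fin T → ℕ) (k : ℕ) :
    NN T Lt (k + 1) = NN T Lt k + 1 + extLt T Lt k := by
  simp [NN, Finset.sum_range_succ, Nat.add_assoc]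

lemma NN_strictMono (T : ℕ) (Lt : Fin T → ℕ) : StrictMono (NN T Lt) :=
  strictMono_nat_of_lt_succ (fun n => by rw [NN_succ]; omega)

/-- The timestamp a global layer index belongs to. -/
def tOf (T : ℕ) (Lt : Fin T → ℕ) (i : ℕ) : ℕ :=
  Nat.findGreatest (fun t => NN T Lt t ≤ i) T

lemma tOf_eq {T : ℕ} {Lt : Fin T → ℕ} {t i : ℕ} (ht : t < T)
    (h1 : NN T Lt t ≤ i) (h2 : i < NN T Lt (t + 1)) : tOf T Lt i = t := by
  apply Nat.findGreatest_eq_iff.mpr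
  refine ⟨ht.le, fun _ => h1, fun n hn hnT hle => ?_⟩
  have : NN T Lt (t + 1) ≤ NN T Lt n := (NN_strictMono T Lt).monotone hn
  omega

/-- The simulating combination function on the collapsed graph. -/
def simC {T : ℕ} {X : Type} (enc : (P1 → Bool) → X → X)
    (C : Fin T → ℕ → X → (P2 → Multiset X) → Multiset X → X) (Lt : Fin T → ℕ) :
    ℕ → (((P1 × Fin T) → Bool) × X) →
      ((P2 × Fin T) → Multiset (((P1 × Fin T) → Bool) × X)) →
      Multiset (((P1 × Fin T) → Bool) × X) → (((P1 × Fin T) → Bool) × X) :=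
  fun i p nb glob =>
    if h : tOf T Lt i < T then
      if i = NN T Lt (tOf T Lt i) then
        (p.1, enc (fun q => p.1 (q, ⟨tOf T Lt i, h⟩)) p.2)
      else
        (p.1, C ⟨tOf T Lt i, h⟩ (i - NN T Lt (tOf T Lt i) - 1) p.2
          (fun r => (nb (r, ⟨tOf T Lt i, h⟩)).map Prod.snd) (glob.map Prod.snd))
    else p

lemma simC_enc {T : ℕ} {X : Type} (enc : (P1 → Bool) → X → X)
    (C : Fin T → ℕ → X → (P2 → Multiset X) → Multiset X → X) (Lt : Fin T → ℕ)
    {i t : ℕ} (ht : t < T) (htof : tOf T Lt i = t) (he : i = NN T Lt t)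
    (p : ((P1 × Fin T) → Bool) × X) (nb glob) :
    simC enc C Lt i p nb glob = (p.1, enc (fun q => p.1 (q, ⟨t, ht⟩)) p.2) := by
  subst htof
  unfold simC
  rw [dif_pos ht, if_pos he]

lemma simC_step {T : ℕ} {X : Type} (enc : (P1 → Bool) → X → X)
    (C : Fin T → ℕ → X → (P2 → Multiset X) → Multiset X → X) (Lt : Fin T → ℕ)
    {i t : ℕ} (ht : t < T) (htof : tOf T Lt i = t) (hne : i ≠ NN T Lt t)
    (p : ((P1 × Fin T) → Bool) × X) (nb glob) :
    simC enc C Lt i p nb glob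
      = (p.1, C ⟨t, ht⟩ (i - NN T Lt t - 1) p.2
          (fun r => (nb (r, ⟨t, ht⟩)).map Prod.snd) (glob.map Prod.snd)) := by
  subst htof
  unfold simC
  rw [dif_pos ht, if_neg hne]

lemma runGNN_succ (G : MRGraph P1 P2) {X : Type} (h0 : G.V → X)
    (C : ℕ → X → (P2 → Multiset X) → Multiset X → X) (i : ℕ) (v : G.V) :
    runGNN G h0 C (i + 1) v
      = C i (runGNN G h0 C i v)
        (fun r => (Finset.univ.filter (fun u => G.rel r v u)).val.map (runGNN G h0 C i))
        (Finset.univ.val.map (runGNN G h0 C i)) := rfl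

lemma simB {T : ℕ} {X : Type} (xinit : X)
    (enc : (P1 → Bool) → X → X)
    (C : Fin T → ℕ → X → (P2 → Multiset X) → Multiset X → X) (Lt : Fin T → ℕ)
    (G : TGraph P1 P2 T)
    (h0 : G.collapse.V → (((P1 × Fin T) → Bool) × X))
    (hh0 : ∀ u, h0 u = ((fun q => decide (G.collapse.unary q u)), xinit)) :
    ∀ k, k ≤ T → ∀ v : G.V,
      runGNN G.collapse h0 (simC enc C Lt) (NN T Lt k) v
      = ((fun q => @decide (G.collapse.unary q v) (G.collapse.decU q v)), runT G xinit enc C Lt k v) := by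
  intro k
  induction k with
  | zero =>
    intro _ v
    exact hh0 v
  | succ k ihk =>
    intro hk1 v
    have hk : k < T := hk1
    have hB := ihk hk.le
    have hext : extLt T Lt k = Lt ⟨k, hk⟩ := dif_pos hk
    have hA : ∀ j, j ≤ Lt ⟨k, hk⟩ → ∀ v : G.V,
        runGNN G.collapse h0 (simC enc C Lt) (NN T Lt k + 1 + j) v
        = ((fun q => @decide (G.collapse.unary q v) (G.collapse.decU q v)),
            runGNN (G.snap ⟨k, hk⟩)
              (fun u => enc (fun q => @decide (G.unary ⟨k, hk⟩ q u) (G.decU ⟨k, hk⟩ q u))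
                (runT G xinit enc C Lt k u))
              (C ⟨k, hk⟩) j v) := by
      intro j
      induction j with
      | zero =>
        intro _ v
        have htof : tOf T Lt (NN T Lt k) = k :=
          tOf_eq (i := NN T Lt k) hk le_rfl (by rw [NN_succ]; omega)
        rw [show NN T Lt k + 1 + 0 = NN T Lt k + 1 from rfl]
        rw [runGNN_succ G.collapse h0 (simC enc C Lt) _ v]
        rw [simC_enc enc C Lt hk htof rfl]
        rw [hB v]
        rfl
      | succ j ihj =>
        intro hj1 v
        have hj : j ≤ Lt ⟨k, hk⟩ := by omega
        have ihj' := ihj hj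
        have hlt : NN T Lt k + 1 + j < NN T Lt (k + 1) := by rw [NN_succ, hext]; omega
        have htof : tOf T Lt (NN T Lt k + 1 + j) = k :=
          tOf_eq (i := NN T Lt k + 1 + j) hk (by omega) hlt
        rw [show NN T Lt k + 1 + (j + 1) = (NN T Lt k + 1 + j) + 1 from rfl]
        rw [runGNN_succ G.collapse h0 (simC enc C Lt) _ v]
        rw [simC_step enc C Lt hk htof (by omega)]
        have hidx : NN T Lt k + 1 + j - NN T Lt k - 1 = j := by omega
        rw [hidx]
        have hx : (runGNN G.collapse h0 (simC enc C Lt) (NN T Lt k + 1 + j) v).1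
            = (fun q => @decide (G.collapse.unary q v) (G.collapse.decU q v)) := by rw [ihj' v]
        have hx2 : (runGNN G.collapse h0 (simC enc C Lt) (NN T Lt k + 1 + j) v).2
            = runGNN (G.snap ⟨k, hk⟩)
              (fun u => enc (fun q => @decide (G.unary ⟨k, hk⟩ q u) (G.decU ⟨k, hk⟩ q u))
                (runT G xinit enc C Lt k u)) (C ⟨k, hk⟩) j v := by rw [ihj' v]
        rw [hx, hx2]
        refine Prod.ext rfl ?_
        show C ⟨k, hk⟩ j _ _ _ = C ⟨k, hk⟩ j _ _ _
        congr 1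
        · funext r
          show (((@Finset.filter _ (fun u => G.collapse.rel (r, ⟨k, hk⟩) v u)
              (fun u => G.collapse.decR (r, ⟨k, hk⟩) v u) Finset.univ).val.map
            (runGNN G.collapse h0 (simC enc C Lt) (NN T Lt k + 1 + j))).map Prod.snd) = _
          rw [Multiset.map_map]
          show ((@Finset.filter _ (fun u => (G.snap ⟨k, hk⟩).rel r v u)
            (fun u => (G.snap ⟨k, hk⟩).decR r v u) Finset.univ).val.map _) = _
          refine Multiset.map_congr rfl (fun u _ => ?_)
          show (runGNN G.collapse h0 (simC enc C Lt) (NN T Lt k + 1 + j) u).2 = _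
          rw [ihj' u]
        · rw [Multiset.map_map]
          refine Multiset.map_congr rfl (fun u _ => ?_)
          show (runGNN G.collapse h0 (simC enc C Lt) (NN T Lt k + 1 + j) u).2 = _
          rw [ihj' u]
    have hNs : NN T Lt (k + 1) = NN T Lt k + 1 + Lt ⟨k, hk⟩ := by rw [NN_succ, hext]
    rw [hNs, hA (Lt ⟨k, hk⟩) le_rfl v]
    refine Prod.ext rfl ?_
    show _ = runT G xinit enc C Lt (k + 1) v
    rw [runT]
    rw [dif_pos hk]

end AuxSim

/-- Every R²-TGNN node classifier is computable by an R²-GNN on the collapsed graph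
(`R²-TGNN ⊆ R²-GNN ∘ H`), and the inclusion is strict: on the witness temporal graph
the collapsed-graph `FOC2` classifier distinguishes nodes `1` and `4` (0-indexed `0`
and `3`), but no R²-TGNN run forward in time can distinguish them. -/
theorem stmt18 :
    (∀ {P1 P2 : Type} [Fintype P1] [Fintype P2] (T : ℕ)
        (c : (G : TGraph P1 P2 T) → G.V → Prop),
      (∃ (X : Type) (xinit : X) (enc : (P1 → Bool) → X → X)
          (C : Fin T → ℕ → X → (P2 → Multiset X) → Multiset X → X)
          (Lt : Fin T → ℕ) (out : X → Prop),
          ∀ (G : TGraph P1 P2 T) (v : G.V),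
            c G v ↔ out (runT G xinit enc C Lt T v)) →
      (∃ (X : Type) (ι : ((P1 × Fin T) → Bool) → X)
          (C : ℕ → X → ((P2 × Fin T) → Multiset X) → Multiset X → X)
          (L : ℕ) (out : X → Prop),
          ∀ (G : TGraph P1 P2 T) (v : G.V),
            c G v ↔ out (runGNN G.collapse
              (fun u => ι (fun q => decide (G.collapse.unary q u))) C L v))) ∧
    (Gex.collapse.sat (fun _ => (0 : Fin 5)) phiEx ∧
     ¬ Gex.collapse.sat (fun _ => (3 : Fin 5)) phiEx ∧
     ∀ (X : Type) (xinit : X) (enc : (Empty → Bool) → X → X)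
       (C : Fin 2 → ℕ → X → (Unit → Multiset X) → Multiset X → X) (Lt : Fin 2 → ℕ),
       runT Gex xinit enc C Lt 2 (0 : Fin 5) = runT Gex xinit enc C Lt 2 (3 : Fin 5)) := by
  constructor
  · intro P1 P2 instP1 instP2 T c h
    obtain ⟨X, xinit, enc, C, Lt, out, hspec⟩ := h
    refine ⟨((P1 × Fin T) → Bool) × X, fun b => (b, xinit), simC enc C Lt, NN T Lt T,
      fun p => out p.2, ?_⟩
    intro G v
    rw [hspec G v, simB xinit enc C Lt G _ (fun u => rfl) T le_rfl v]
  · exact ⟨@of_decide_eq_true _ (satDec _ _ _) (by decide),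
      @of_decide_eq_true _ (@instDecidableNot _ (satDec _ _ _)) (by decide), part3⟩
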